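/- Let α, β ∈ (0, 1], let B ≥ 1 be an integer, and let F* ≥ 0 be a real number. Let (Ω, 𝓕, P) be a probability space with a filtration 𝓕_0 ⊆ 𝓕_1 ⊆ ⋯ ⊆ 𝓕_B, and let Y_0, Y_1, …, Y_B be integrable real random variables with Y_b 𝓕_b-measurable, Y_0 ≥ 0 and Y_b ≤ F* almost surely for all b, and E[Y_{b+1} − Y_b | 𝓕_b] ≥ (αβ / (B − b)) · (F* − Y_b) almost surely for every 0 ≤ b ≤ B−1. Then E[Y_B] ≥ (1 − e^{−αβ}) · F*. -/

import Mathlib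

open MeasureTheory

/-- Frontier-aware approximate greedy guarantee (stochastic version): if `Y_b` is the
coverage value after `b` additions, adapted to a filtration, bounded below by `0` at time
`0` and above by `F*`, and the expected one-step gain conditioned on the past satisfies
`E[Y_{b+1} − Y_b | 𝓕_b] ≥ (αβ/(B−b))·(F* − Y_b)`, then `E[Y_B] ≥ (1 − e^{−αβ})·F*`. -/
theorem stmt11 {Ω : Type*} {m0 : MeasurableSpace Ω} (μ : Measure Ω)
    [IsProbabilityMeasure μ] (ℱ : Filtration ℕ m0)
    (α β : ℝ) (hα : α ∈ Set.Ioc (0 : ℝ) 1) (hβ : β ∈ Set.Ioc (0 : ℝ) 1)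
    (B : ℕ) (hB : 1 ≤ B) (Fstar : ℝ) (hFstar : 0 ≤ Fstar)
    (Y : ℕ → Ω → ℝ)
    (hint : ∀ b ≤ B, Integrable (Y b) μ)
    (hmeas : ∀ b ≤ B, StronglyMeasurable[ℱ b] (Y b))
    (hY0 : 0 ≤ᵐ[μ] Y 0)
    (hYle : ∀ b ≤ B, Y b ≤ᵐ[μ] fun _ => Fstar)
    (hcond : ∀ b < B,
      (fun ω => α * β / ((B - b : ℕ) : ℝ) * (Fstar - Y b ω)) ≤ᵐ[μ]
        μ[Y (b + 1) - Y b | ℱ b]) :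
    (1 - Real.exp (-(α * β))) * Fstar ≤ ∫ ω, Y B ω ∂μ := by
  obtain ⟨hα0, hα1⟩ := hα
  obtain ⟨hβ0, hβ1⟩ := hβ
  have hab0 : 0 < α * β := mul_pos hα0 hβ0
  have hab1 : α * β ≤ 1 := by nlinarith
  -- notation
  set d : ℕ → ℝ := fun b => Fstar - ∫ ω, Y b ω ∂μ with hd
  set c : ℕ → ℝ := fun b => α * β / ((B - b : ℕ) : ℝ) with hc
  -- d b ≥ 0 for b ≤ B
  have hdnonneg : ∀ b ≤ B, 0 ≤ d b := by
    intro b hb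
    have : ∫ ω, Y b ω ∂μ ≤ ∫ _ω, Fstar ∂μ :=
      integral_mono_ae (hint b hb) (integrable_const _) (hYle b hb)
    simp only [integral_const, measure_univ, ENNReal.toReal_one, probReal_univ, one_smul] at this
    simp [hd]; linarith
  -- step inequality
  have hstep : ∀ b < B, d (b + 1) ≤ (1 - c b) * d b := by
    intro b hbB
    have hb1 : (1 : ℝ) ≤ ((B - b : ℕ) : ℝ) := by
      have : 1 ≤ B - b := by omega
      exact_mod_cast this
    have hcpos : 0 < ((B - b : ℕ) : ℝ) := by linarith
    have h1 : ∫ ω, (α * β / ((B - b : ℕ) : ℝ) * (Fstar - Y b ω)) ∂μ ≤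
        ∫ ω, (μ[Y (b + 1) - Y b | ℱ b]) ω ∂μ := by
      refine integral_mono_ae ?_ integrable_condExp (hcond b hbB)
      exact ((integrable_const Fstar).sub (hint b (le_of_lt hbB))).const_mul _
    rw [integral_condExp (ℱ.le b)] at h1
    have h2 : ∫ ω, (Y (b + 1) - Y b) ω ∂μ =
        (∫ ω, Y (b + 1) ω ∂μ) - ∫ ω, Y b ω ∂μ := by
      exact integral_sub (hint (b + 1) (by omega)) (hint b (le_of_lt hbB))
    rw [h2] at h1
    have h3 : ∫ ω, (α * β / ((B - b : ℕ) : ℝ) * (Fstar - Y b ω)) ∂μ =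
        c b * d b := by
      rw [integral_const_mul, integral_sub (integrable_const _) (hint b (le_of_lt hbB))]
      simp [hc, hd]
    rw [h3] at h1
    have : c b * d b ≤ (∫ ω, Y (b + 1) ω ∂μ) - ∫ ω, Y b ω ∂μ := h1
    simp only [hd] at this ⊢
    nlinarith [this]
  -- c b ∈ [0,1] bounds and 1 - c b ≤ exp (-c b)
  have hcb : ∀ b < B, 0 < c b ∧ c b ≤ 1 := by
    intro b hbB
    have hb1 : (1 : ℝ) ≤ ((B - b : ℕ) : ℝ) := by
      have : 1 ≤ B - b := by omega
      exact_mod_cast this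
    constructor
    · exact div_pos hab0 (by linarith)
    · rw [div_le_one (by linarith)]; linarith
  -- induction: d b ≤ exp(-(αβ * ∑_{i<b} 1/(B-i))) * Fstar
  have hind : ∀ b ≤ B,
      d b ≤ Real.exp (-(α * β * ∑ i ∈ Finset.range b, 1 / ((B - i : ℕ) : ℝ))) * Fstar := by
    intro b
    induction b with
    | zero =>
        intro _
        have h0 : 0 ≤ ∫ ω, Y 0 ω ∂μ :=
          integral_nonneg_of_ae hY0
        simp only [Finset.range_zero, Finset.sum_empty, mul_zero, neg_zero, Real.exp_zero,
          one_mul]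
        simp [hd]; linarith
    | succ b ih =>
        intro hb
        have hbB : b < B := by omega
        have hdb := ih (le_of_lt hbB)
        obtain ⟨hc0, hc1⟩ := hcb b hbB
        have hdbn := hdnonneg b (le_of_lt hbB)
        calc d (b + 1) ≤ (1 - c b) * d b := hstep b hbB
          _ ≤ Real.exp (-(c b)) * d b := by
              nlinarith [Real.add_one_le_exp (-(c b))]
          _ ≤ Real.exp (-(c b)) *
              (Real.exp (-(α * β * ∑ i ∈ Finset.range b, 1 / ((B - i : ℕ) : ℝ))) * Fstar) := by
              exact mul_le_mul_of_nonneg_left hdb (Real.exp_nonneg _)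
          _ = Real.exp (-(α * β * ∑ i ∈ Finset.range (b + 1), 1 / ((B - i : ℕ) : ℝ))) * Fstar := by
              rw [← mul_assoc, ← Real.exp_add, Finset.sum_range_succ]
              congr 2
              simp only [hc]
              field_simp
              ring
  -- sum over range B is at least 1
  have hsum : (1 : ℝ) ≤ ∑ i ∈ Finset.range B, 1 / ((B - i : ℕ) : ℝ) := by
    have hmem : B - 1 ∈ Finset.range B := Finset.mem_range.mpr (by omega)
    have hterm : 1 / ((B - (B - 1) : ℕ) : ℝ) = 1 := by
      have : B - (B - 1) = 1 := by omega
      rw [this]; norm_num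
    calc (1 : ℝ) = 1 / ((B - (B - 1) : ℕ) : ℝ) := hterm.symm
      _ ≤ ∑ i ∈ Finset.range B, 1 / ((B - i : ℕ) : ℝ) := by
          refine Finset.single_le_sum (f := fun i => 1 / ((B - i : ℕ) : ℝ)) (fun i _ => ?_) hmem
          positivity
  have hfinal := hind B le_rfl
  have hexp : Real.exp (-(α * β * ∑ i ∈ Finset.range B, 1 / ((B - i : ℕ) : ℝ))) ≤
      Real.exp (-(α * β)) := by
    apply Real.exp_le_exp.mpr
    have : α * β * 1 ≤ α * β * ∑ i ∈ Finset.range B, 1 / ((B - i : ℕ) : ℝ) :=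
      mul_le_mul_of_nonneg_left hsum (le_of_lt hab0)
    linarith
  have : d B ≤ Real.exp (-(α * β)) * Fstar :=
    hfinal.trans (mul_le_mul_of_nonneg_right hexp hFstar)
  simp only [hd] at this
  linarith
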